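/- Let 𝔤 be a complex reductive Lie algebra with principal sl₂-triple {e,h,f} (in a semisimple quotient sense) and decomposition 𝔤 = 𝔷_𝔤(e) ⊕ 𝔫. Define π: S(𝔤[t]) → S(𝔷_𝔤(e)[t]) on generators by π(x[n]) = x[n] for x ∈ 𝔷_𝔤(e) and π(x[n]) = δ_{0,n}⟨x,f⟩ for x ∈ 𝔫. Then π commutes with the derivation D (D(x[n]) = (n+1)x[n+1] on the source and target) when restricted appropriately, and if restriction of functions induces an isomorphism S(𝔤)^𝔤 ≅ ℂ[f + 𝔷_𝔤(e)] (Kostant's theorem), then π maps the universal Gaudin subalgebra A_𝔤 = ℂ[D^k Φ_i] isomorphically onto S(𝔷_𝔤(e)[t]). -/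

import Mathlib

open MvPolynomial

/-- The image in `S(𝔤[t])` (polynomials in variables `x_a[k]`) of `x ⊗ tᵏ`. -/
noncomputable def lin {ι L : Type*} [LieRing L] [LieAlgebra ℂ L]
    (b : Module.Basis ι ℂ L) (x : L) (k : ℕ) : MvPolynomial (ι × ℕ) ℂ :=
  (b.repr x).sum fun a c => MvPolynomial.C c * MvPolynomial.X (a, k)

/-- The adjoint action of `x ∈ 𝔤` on `S(𝔤[t])` by derivations. -/
noncomputable def lact {ι L : Type*} [DecidableEq ι] [LieRing L] [LieAlgebra ℂ L]
    (b : Module.Basis ι ℂ L) (x : L) (f : MvPolynomial (ι × ℕ) ℂ) :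
    MvPolynomial (ι × ℕ) ℂ :=
  ∑ p ∈ f.vars, pderiv p f * lin b ⁅x, b p.1⁆ p.2

/-- The derivation `D` of `S(𝔤[t])` with `D(x[n]) = (n+1)·x[n+1]`. -/
noncomputable def Dop {ι : Type*} [DecidableEq ι]
    (f : MvPolynomial (ι × ℕ) ℂ) : MvPolynomial (ι × ℕ) ℂ :=
  ∑ p ∈ f.vars, ((p.2 + 1 : ℕ) : ℂ) • (pderiv p f * MvPolynomial.X (p.1, p.2 + 1))

namespace St17Aux

/-- Any derivation equals the sum over variables of partials times values on `X`. -/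
lemma deriv_eq_sum_aux {σ : Type*} [DecidableEq σ]
    (d : Derivation ℂ (MvPolynomial σ ℂ) (MvPolynomial σ ℂ)) (f : MvPolynomial σ ℂ) :
    ∀ (s : Finset σ), f.vars ⊆ s → d f = ∑ p ∈ s, pderiv p f * d (X p) := by
  induction f using MvPolynomial.induction_on with
  | C a =>
      intro s _
      simp [pderiv_C]
  | add p q hp hq =>
      intro s hs
      have key : d (p + q) = ∑ x ∈ s ∪ p.vars ∪ q.vars, pderiv x (p + q) * d (X x) := by
        rw [map_add,
          hp (s ∪ p.vars ∪ q.vars)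
            (fun x hx => Finset.mem_union_left _ (Finset.mem_union_right _ hx)),
          hq (s ∪ p.vars ∪ q.vars) (fun x hx => Finset.mem_union_right _ hx),
          ← Finset.sum_add_distrib]
        refine Finset.sum_congr rfl fun x _ => ?_
        rw [map_add]
        ring
      rw [key]
      refine (Finset.sum_subset
        (fun x hx => Finset.mem_union_left _ (Finset.mem_union_left _ hx))
        fun x _ hx => ?_).symm
      rw [pderiv_eq_zero_of_notMem_vars (fun hv => hx (hs hv)), zero_mul]
  | mul_X p n hp =>
      intro s hs
      have hnt : n ∈ s ∪ p.vars ∪ {n} := by simp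
      have key : d (p * X n) = ∑ x ∈ s ∪ p.vars ∪ {n}, pderiv x (p * X n) * d (X x) := by
        have h1 : ∀ x ∈ s ∪ p.vars ∪ {n}, pderiv x (p * X n) * d (X x)
            = (if n = x then p * d (X n) else 0) + X n * (pderiv x p * d (X x)) := by
          intro x _
          rw [Derivation.leibniz, smul_eq_mul, smul_eq_mul, pderiv_X, Pi.single_apply]
          by_cases hx : n = x
          · subst hx; simp; ring
          · rw [if_neg hx, if_neg hx, mul_zero, zero_add]
            ring
        rw [Finset.sum_congr rfl h1, Finset.sum_add_distrib, Finset.sum_ite_eq, if_pos hnt,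
          ← Finset.mul_sum,
          ← hp (s ∪ p.vars ∪ {n})
            (fun x hx => Finset.mem_union_left _ (Finset.mem_union_right _ hx)),
          Derivation.leibniz, smul_eq_mul, smul_eq_mul]
      rw [key]
      refine (Finset.sum_subset
        (fun x hx => Finset.mem_union_left _ (Finset.mem_union_left _ hx))
        fun x _ hx => ?_).symm
      rw [pderiv_eq_zero_of_notMem_vars (fun hv => hx (hs hv)), zero_mul]

lemma deriv_eq_sum {σ : Type*} [DecidableEq σ]
    (d : Derivation ℂ (MvPolynomial σ ℂ) (MvPolynomial σ ℂ)) (f : MvPolynomial σ ℂ) :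
    d f = ∑ p ∈ f.vars, pderiv p f * d (X p) :=
  deriv_eq_sum_aux d f f.vars Finset.Subset.rfl

variable {ι : Type*} [DecidableEq ι]

/-- `Dop` as a bona fide derivation. -/
noncomputable def Dder (ι : Type*) :
    Derivation ℂ (MvPolynomial (ι × ℕ) ℂ) (MvPolynomial (ι × ℕ) ℂ) :=
  mkDerivation ℂ fun p : ι × ℕ => ((p.2 + 1 : ℕ) : ℂ) • X (p.1, p.2 + 1)

lemma Dder_X (p : ι × ℕ) :
    Dder ι (X p) = ((p.2 + 1 : ℕ) : ℂ) • X (p.1, p.2 + 1) := by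
  unfold Dder; exact mkDerivation_X (R := ℂ) _ p

lemma Dop_eq_Dder (f : MvPolynomial (ι × ℕ) ℂ) : Dop f = Dder ι f := by
  rw [deriv_eq_sum (Dder ι) f, Dop]
  refine Finset.sum_congr rfl fun p _ => ?_
  rw [Dder_X, mul_smul_comm]

lemma Dop_C (r : ℂ) : Dop (C r : MvPolynomial (ι × ℕ) ℂ) = 0 := by
  rw [Dop_eq_Dder, derivation_C]

lemma Dop_add (f g : MvPolynomial (ι × ℕ) ℂ) : Dop (f + g) = Dop f + Dop g := by
  rw [Dop_eq_Dder, map_add, Dop_eq_Dder, Dop_eq_Dder]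

lemma Dop_mul (f g : MvPolynomial (ι × ℕ) ℂ) :
    Dop (f * g) = f * Dop g + g * Dop f := by
  rw [Dop_eq_Dder, Derivation.leibniz, smul_eq_mul, smul_eq_mul, Dop_eq_Dder, Dop_eq_Dder]

lemma Dop_smul (c : ℂ) (f : MvPolynomial (ι × ℕ) ℂ) : Dop (c • f) = c • Dop f := by
  rw [Dop_eq_Dder, (Dder ι).map_smul, Dop_eq_Dder]

/-- `lact` as a derivation. -/
noncomputable def lactDer {L : Type*} [LieRing L] [LieAlgebra ℂ L] (b : Module.Basis ι ℂ L) (x : L) :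
    Derivation ℂ (MvPolynomial (ι × ℕ) ℂ) (MvPolynomial (ι × ℕ) ℂ) :=
  mkDerivation ℂ fun p : ι × ℕ => lin b ⁅x, b p.1⁆ p.2

lemma lact_eq {L : Type*} [LieRing L] [LieAlgebra ℂ L] (b : Module.Basis ι ℂ L) (x : L)
    (f : MvPolynomial (ι × ℕ) ℂ) : lact b x f = lactDer b x f := by
  rw [deriv_eq_sum (lactDer b x) f, lact]
  exact Finset.sum_congr rfl fun p _ => by rw [lactDer, mkDerivation_X]

lemma lact_C {L : Type*} [LieRing L] [LieAlgebra ℂ L] (b : Module.Basis ι ℂ L) (x : L) (r : ℂ) :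
    lact b x (C r) = 0 := by
  rw [lact_eq, derivation_C]

lemma lact_add {L : Type*} [LieRing L] [LieAlgebra ℂ L] (b : Module.Basis ι ℂ L) (x : L)
    (f g : MvPolynomial (ι × ℕ) ℂ) : lact b x (f + g) = lact b x f + lact b x g := by
  rw [lact_eq, map_add, lact_eq, lact_eq]

lemma lact_mul {L : Type*} [LieRing L] [LieAlgebra ℂ L] (b : Module.Basis ι ℂ L) (x : L)
    (f g : MvPolynomial (ι × ℕ) ℂ) :
    lact b x (f * g) = f * lact b x g + g * lact b x f := by
  rw [lact_eq, Derivation.leibniz, smul_eq_mul, smul_eq_mul, lact_eq, lact_eq]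

/-- An algebra endomorphism intertwines two derivations iff it does so on generators. -/
lemma hom_comm {σ : Type*} (g : MvPolynomial σ ℂ →ₐ[ℂ] MvPolynomial σ ℂ)
    (d d' : Derivation ℂ (MvPolynomial σ ℂ) (MvPolynomial σ ℂ))
    (hX : ∀ p, g (d (X p)) = d' (g (X p))) (f : MvPolynomial σ ℂ) :
    g (d f) = d' (g f) := by
  induction f using MvPolynomial.induction_on with
  | C a =>
      rw [derivation_C, map_zero, ← algebraMap_eq, AlgHom.commutes, Derivation.map_algebraMap]
  | add p q hp hq => rw [map_add, map_add, map_add, map_add, hp, hq]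
  | mul_X p n hp =>
      rw [Derivation.leibniz, smul_eq_mul, smul_eq_mul, map_add, map_mul, map_mul, map_mul,
        Derivation.leibniz, smul_eq_mul, smul_eq_mul, hp, hX]

lemma Dop_iter_X (a : ι) (k : ℕ) :
    Dop^[k] (X (a, 0) : MvPolynomial (ι × ℕ) ℂ) = ((Nat.factorial k : ℕ) : ℂ) • X (a, k) := by
  induction k with
  | zero => simp
  | succ k ih =>
      rw [Function.iterate_succ_apply', ih, Dop_smul, Dop_eq_Dder, Dder_X, smul_smul]
      congr 1
      push_cast [Nat.factorial_succ]
      ring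

end St17Aux

open St17Aux

/-- Let `𝔤` be a complex reductive Lie algebra with
`sl₂`-triple `(e, h, f₀)` and decomposition `𝔤 = 𝔷_𝔤(e) ⊕ 𝔫` (the basis `b` is
adapted: the basis vectors indexed by `zs` span the centralizer `𝔷_𝔤(e)`).
Define `π : S(𝔤[t]) → S(𝔷_𝔤(e)[t])` by `π(x[n]) = x[n]` for `x ∈ 𝔷_𝔤(e)` and
`π(x[n]) = δ_{0,n}⟨x,f₀⟩` for `x ∈ 𝔫`.  Then `π` commutes with the derivation
`D`, and — assuming Kostant's theorem, that restriction of invariants to the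
slice `f₀ + 𝔷_𝔤(e)` is an isomorphism `S(𝔤)^𝔤 ≅ ℂ[f₀ + 𝔷_𝔤(e)]` — `π` maps the
universal Gaudin subalgebra `A_𝔤 = ℂ[DᵏΦᵢ]` isomorphically onto
`S(𝔷_𝔤(e)[t])` (injectively, with image all polynomials in the `zs`-variables). -/
theorem statement17 {ι L : Type*} [DecidableEq ι] [Fintype ι]
    [LieRing L] [LieAlgebra ℂ L] [FiniteDimensional ℂ L] (b : Module.Basis ι ℂ L)
    (κ : L →ₗ[ℂ] L →ₗ[ℂ] ℂ)
    (hκsymm : ∀ x y : L, κ x y = κ y x)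
    (hκinv : ∀ x y z : L, κ ⁅x, y⁆ z + κ y ⁅x, z⁆ = 0)
    (hκnondeg : ∀ x : L, (∀ y : L, κ x y = 0) → x = 0)
    (e h f₀ : L)
    (hhe : ⁅h, e⁆ = (2 : ℂ) • e) (hhf : ⁅h, f₀⁆ = (-2 : ℂ) • f₀)
    (hef : ⁅e, f₀⁆ = h)
    (zs : Set ι) [DecidablePred (· ∈ zs)]
    (hzs : ∀ a : ι, a ∈ zs ↔ ⁅e, b a⁆ = 0)
    (hzspan : ∀ x : L, ⁅e, x⁆ = 0 → x ∈ Submodule.span ℂ (b '' zs))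
    (r : ℕ) (Φ : Fin r → MvPolynomial (ι × ℕ) ℂ)
    (hdeg : ∀ i, ∀ p ∈ (Φ i).vars, p.2 = 0)
    (hinv : ∀ i (x : L), lact b x (Φ i) = 0)
    (hind : AlgebraicIndependent ℂ Φ)
    (hgen : ∀ f : MvPolynomial (ι × ℕ) ℂ, (∀ p ∈ f.vars, p.2 = 0) →
      (∀ x : L, lact b x f = 0) → f ∈ Algebra.adjoin ℂ (Set.range Φ)) :
    let π : MvPolynomial (ι × ℕ) ℂ →ₐ[ℂ] MvPolynomial (ι × ℕ) ℂ :=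
      aeval fun p : ι × ℕ =>
        if p.1 ∈ zs then (X p : MvPolynomial (ι × ℕ) ℂ)
        else if p.2 = 0 then C (κ (b p.1) f₀) else 0
    let A : Subalgebra ℂ (MvPolynomial (ι × ℕ) ℂ) :=
      Algebra.adjoin ℂ
        {g : MvPolynomial (ι × ℕ) ℂ | ∃ (k : ℕ) (i : Fin r), g = Dop^[k] (Φ i)}
    (∀ f : MvPolynomial (ι × ℕ) ℂ, π (Dop f) = Dop (π f)) ∧
    ((∀ g : MvPolynomial (ι × ℕ) ℂ, (∀ p ∈ g.vars, p.1 ∈ zs ∧ p.2 = 0) →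
        ∃! f : MvPolynomial (ι × ℕ) ℂ,
          ((∀ p ∈ f.vars, p.2 = 0) ∧ ∀ x : L, lact b x f = 0) ∧ π f = g) →
      Set.InjOn π (A : Set (MvPolynomial (ι × ℕ) ℂ)) ∧
      (∀ g : MvPolynomial (ι × ℕ) ℂ, (∀ p ∈ g.vars, p.1 ∈ zs) →
        ∃ f ∈ A, π f = g) ∧
      (∀ f ∈ A, ∀ p ∈ (π f).vars, p.1 ∈ zs)) := by
  intro π A
  have hπdef : π = aeval (fun p : ι × ℕ =>
      if p.1 ∈ zs then (X p : MvPolynomial (ι × ℕ) ℂ)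
      else if p.2 = 0 then C (κ (b p.1) f₀) else 0) := rfl
  have hπX : ∀ p : ι × ℕ, π (X p) =
      if p.1 ∈ zs then (X p : MvPolynomial (ι × ℕ) ℂ)
      else if p.2 = 0 then C (κ (b p.1) f₀) else 0 := fun p => aeval_X _ p
  -- Part 1 : π ∘ D = D ∘ π
  have hπD : ∀ f, π (Dop f) = Dop (π f) := by
    intro f
    rw [Dop_eq_Dder, Dop_eq_Dder]
    refine hom_comm π _ _ (fun p => ?_) f
    rw [Dder_X, map_smul, hπX, hπX]
    by_cases hz : p.1 ∈ zs
    · rw [if_pos hz, if_pos hz, Dder_X]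
    · rw [if_neg hz, if_neg hz, if_neg (Nat.succ_ne_zero p.2), smul_zero]
      by_cases h0 : p.2 = 0
      · rw [if_pos h0, derivation_C]
      · rw [if_neg h0, map_zero]
  refine ⟨hπD, fun H => ?_⟩
  have hπDk : ∀ (k : ℕ) f, π (Dop^[k] f) = Dop^[k] (π f) := by
    intro k
    induction k with
    | zero => intro f; rfl
    | succ k ih =>
        intro f
        rw [Function.iterate_succ_apply', Function.iterate_succ_apply', hπD, ih]
  -- variables appearing in images of π
  have hπvars' : ∀ (f : MvPolynomial (ι × ℕ) ℂ) (p : ι × ℕ), p ∈ (π f).vars →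
      ∃ q ∈ f.vars, p ∈ (if q.1 ∈ zs then (X q : MvPolynomial (ι × ℕ) ℂ)
        else if q.2 = 0 then C (κ (b q.1) f₀) else 0).vars := by
    intro f p hp
    rw [hπdef, aeval_eq_bind₁] at hp
    exact mem_vars_bind₁ _ _ hp
  have hπvars : ∀ (f : MvPolynomial (ι × ℕ) ℂ), ∀ p ∈ (π f).vars, p.1 ∈ zs := by
    intro f p hp
    obtain ⟨q, _, hpq⟩ := hπvars' f p hp
    by_cases hz : q.1 ∈ zs
    · rw [if_pos hz, vars_X, Finset.mem_singleton] at hpq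
      rw [hpq]; exact hz
    · rw [if_neg hz] at hpq
      by_cases h0 : q.2 = 0
      · rw [if_pos h0, vars_C] at hpq; exact absurd hpq (Finset.notMem_empty p)
      · rw [if_neg h0, vars_0] at hpq; exact absurd hpq (Finset.notMem_empty p)
  have hπΦvars : ∀ i, ∀ p ∈ (π (Φ i)).vars, p.1 ∈ zs ∧ p.2 = 0 := by
    intro i p hp
    obtain ⟨q, hq, hpq⟩ := hπvars' (Φ i) p hp
    by_cases hz : q.1 ∈ zs
    · rw [if_pos hz, vars_X, Finset.mem_singleton] at hpq
      rw [hpq]; exact ⟨hz, hdeg i q hq⟩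
    · rw [if_neg hz] at hpq
      by_cases h0 : q.2 = 0
      · rw [if_pos h0, vars_C] at hpq; exact absurd hpq (Finset.notMem_empty p)
      · rw [if_neg h0, vars_0] at hpq; exact absurd hpq (Finset.notMem_empty p)
  -- the Kostant sections F a for a ∈ zs
  have hXvars : ∀ a, a ∈ zs → ∀ p ∈ (X (a, 0) : MvPolynomial (ι × ℕ) ℂ).vars,
      p.1 ∈ zs ∧ p.2 = 0 := by
    intro a ha p hp
    rw [vars_X, Finset.mem_singleton] at hp
    rw [hp]; exact ⟨ha, rfl⟩
  have hex : ∀ a : ι, ∃ fa : MvPolynomial (ι × ℕ) ℂ,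
      a ∈ zs → (((∀ p ∈ fa.vars, p.2 = 0) ∧ ∀ x : L, lact b x fa = 0) ∧ π fa = X (a, 0)) := by
    intro a
    by_cases ha : a ∈ zs
    · obtain ⟨fa, hfa, -⟩ := H (X (a, 0)) (hXvars a ha)
      exact ⟨fa, fun _ => hfa⟩
    · exact ⟨0, fun h' => absurd h' ha⟩
  choose F hFspec using hex
  -- the section ρ
  let ρ : MvPolynomial (ι × ℕ) ℂ →ₐ[ℂ] MvPolynomial (ι × ℕ) ℂ :=
    aeval fun p : ι × ℕ =>
      if p.1 ∈ zs then ((Nat.factorial p.2 : ℕ) : ℂ)⁻¹ • Dop^[p.2] (F p.1) else 0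
  have hρX : ∀ p : ι × ℕ, ρ (X p) =
      if p.1 ∈ zs then ((Nat.factorial p.2 : ℕ) : ℂ)⁻¹ • Dop^[p.2] (F p.1) else 0 :=
    fun p => aeval_X _ p
  have hfacne : ∀ k : ℕ, ((Nat.factorial k : ℕ) : ℂ) ≠ 0 :=
    fun k => Nat.cast_ne_zero.2 (Nat.factorial_ne_zero k)
  have hρD : ∀ f, ρ (Dop f) = Dop (ρ f) := by
    intro f
    rw [Dop_eq_Dder, Dop_eq_Dder]
    refine hom_comm ρ _ _ (fun p => ?_) f
    rw [Dder_X, map_smul, hρX, hρX]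
    by_cases hz : p.1 ∈ zs
    · rw [if_pos hz, if_pos hz, (Dder ι).map_smul, smul_smul,
        ← Dop_eq_Dder, ← Function.iterate_succ_apply' Dop p.2 (F p.1)]
      congr 1
      have h1 : ((Nat.factorial (p.2 + 1) : ℕ) : ℂ)
          = ((p.2 + 1 : ℕ) : ℂ) * ((Nat.factorial p.2 : ℕ) : ℂ) := by
        rw [Nat.factorial_succ]; push_cast; ring
      rw [h1, mul_inv, ← mul_assoc,
        mul_inv_cancel₀ (Nat.cast_ne_zero.2 p.2.succ_ne_zero), one_mul]
    · rw [if_neg hz, if_neg hz, smul_zero, map_zero]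
  have hρDk : ∀ (k : ℕ) f, ρ (Dop^[k] f) = Dop^[k] (ρ f) := by
    intro k
    induction k with
    | zero => intro f; rfl
    | succ k ih =>
        intro f
        rw [Function.iterate_succ_apply', Function.iterate_succ_apply', hρD, ih]
  have hπρX : ∀ a, a ∈ zs → ∀ k : ℕ, π (ρ (X ((a, k) : ι × ℕ))) = X (a, k) := by
    intro a ha k
    rw [hρX, if_pos ha, map_smul]
    show ((Nat.factorial k : ℕ) : ℂ)⁻¹ • π (Dop^[k] (F a)) = _
    rw [hπDk, ((hFspec a ha).2 : π (F a) = X (a, 0)), Dop_iter_X, smul_smul,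
      inv_mul_cancel₀ (hfacne k), one_smul]
  -- membership in adjoins from vars
  have hsup : ∀ (s : Set (ι × ℕ)) (g : MvPolynomial (ι × ℕ) ℂ), (∀ p ∈ g.vars, p ∈ s) →
      g ∈ Algebra.adjoin ℂ (MvPolynomial.X '' s : Set (MvPolynomial (ι × ℕ) ℂ)) := by
    intro s g hg
    exact (mem_supported (R := ℂ)).2 (fun p hp => hg p (Finset.mem_coe.1 hp))
  -- A is closed under Dop and contains the F a
  have hDopA : ∀ f ∈ A, Dop f ∈ A := by
    intro f hf
    induction hf using Algebra.adjoin_induction with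
    | mem x hx =>
        obtain ⟨k, i, rfl⟩ := hx
        exact Algebra.subset_adjoin ⟨k + 1, i, (Function.iterate_succ_apply' _ _ _).symm⟩
    | algebraMap r =>
        rw [show (algebraMap ℂ (MvPolynomial (ι × ℕ) ℂ) r) = C r from rfl, Dop_C]
        exact zero_mem A
    | add x y hx hy ihx ihy => rw [Dop_add]; exact add_mem ihx ihy
    | mul x y hx hy ihx ihy =>
        rw [Dop_mul]; exact add_mem (mul_mem hx ihy) (mul_mem hy ihx)
  have hDopkA : ∀ (k : ℕ) (f), f ∈ A → Dop^[k] f ∈ A := by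
    intro k
    induction k with
    | zero => intro f hf; exact hf
    | succ k ih =>
        intro f hf
        rw [Function.iterate_succ_apply']
        exact hDopA _ (ih f hf)
  have hΦA : ∀ i, Φ i ∈ A := fun i => Algebra.subset_adjoin ⟨0, i, rfl⟩
  have hrangeΦA : Algebra.adjoin ℂ (Set.range Φ) ≤ A := by
    refine Algebra.adjoin_le ?_
    rintro g ⟨i, rfl⟩
    exact hΦA i
  have hFA : ∀ a, a ∈ zs → F a ∈ A := by
    intro a ha
    exact hrangeΦA (hgen (F a) (hFspec a ha).1.1 (hFspec a ha).1.2)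
  -- π ∘ ρ = id on polynomials supported in zs
  have hπρ : ∀ g : MvPolynomial (ι × ℕ) ℂ, (∀ p ∈ g.vars, p.1 ∈ zs) → π (ρ g) = g := by
    have key : ∀ g ∈ Algebra.adjoin ℂ
        (MvPolynomial.X '' {p : ι × ℕ | p.1 ∈ zs} : Set (MvPolynomial (ι × ℕ) ℂ)),
        π (ρ g) = g := by
      intro g hg
      induction hg using Algebra.adjoin_induction with
      | mem x hx =>
          obtain ⟨p, hp, rfl⟩ := hx
          exact hπρX p.1 hp p.2
      | algebraMap r => rw [AlgHom.commutes, AlgHom.commutes]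
      | add x y hx hy ihx ihy => rw [map_add, map_add, ihx, ihy]
      | mul x y hx hy ihx ihy => rw [map_mul, map_mul, ihx, ihy]
    intro g hg
    exact key g (hsup _ g hg)
  -- ρ maps polynomials supported in zs into A
  have hρA : ∀ g : MvPolynomial (ι × ℕ) ℂ, (∀ p ∈ g.vars, p.1 ∈ zs) → ρ g ∈ A := by
    have key : ∀ g ∈ Algebra.adjoin ℂ
        (MvPolynomial.X '' {p : ι × ℕ | p.1 ∈ zs} : Set (MvPolynomial (ι × ℕ) ℂ)),
        ρ g ∈ A := by
      intro g hg
      induction hg using Algebra.adjoin_induction with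
      | mem x hx =>
          obtain ⟨p, hp, rfl⟩ := hx
          rw [hρX, if_pos (show p.1 ∈ zs from hp)]
          exact A.smul_mem (hDopkA p.2 _ (hFA p.1 hp)) _
      | algebraMap r => rw [AlgHom.commutes]; exact A.algebraMap_mem r
      | add x y hx hy ihx ihy => rw [map_add]; exact add_mem ihx ihy
      | mul x y hx hy ihx ihy => rw [map_mul]; exact mul_mem ihx ihy
    intro g hg
    exact key g (hsup _ g hg)
  -- ρ of a zs-level-0 polynomial is invariant of level 0
  have hρQ : ∀ g : MvPolynomial (ι × ℕ) ℂ, (∀ p ∈ g.vars, p.1 ∈ zs ∧ p.2 = 0) →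
      (∀ p ∈ (ρ g).vars, p.2 = 0) ∧ ∀ x : L, lact b x (ρ g) = 0 := by
    have key : ∀ g ∈ Algebra.adjoin ℂ
        (MvPolynomial.X '' {p : ι × ℕ | p.1 ∈ zs ∧ p.2 = 0} : Set (MvPolynomial (ι × ℕ) ℂ)),
        (∀ p ∈ (ρ g).vars, p.2 = 0) ∧ ∀ x : L, lact b x (ρ g) = 0 := by
      intro g hg
      induction hg using Algebra.adjoin_induction with
      | mem x hx =>
          obtain ⟨p, ⟨hp1, hp2⟩, rfl⟩ := hx
          have hps : p = (p.1, 0) := Prod.ext rfl hp2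
          rw [hρX, if_pos hp1, hps]
          show (∀ q ∈ (((Nat.factorial 0 : ℕ) : ℂ)⁻¹ • Dop^[0] (F p.1)).vars, q.2 = 0) ∧ _
          have h1 : ((Nat.factorial 0 : ℕ) : ℂ)⁻¹ • Dop^[0] (F p.1) = F p.1 := by
            simp
          rw [h1]
          exact (hFspec p.1 hp1).1
      | algebraMap r =>
          rw [AlgHom.commutes]
          constructor
          · intro p hp
            rw [show (algebraMap ℂ (MvPolynomial (ι × ℕ) ℂ) r) = C r from rfl, vars_C] at hp
            exact absurd hp (Finset.notMem_empty p)
          · intro x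
            rw [show (algebraMap ℂ (MvPolynomial (ι × ℕ) ℂ) r) = C r from rfl, lact_C]
      | add x y hx hy ihx ihy =>
          rw [map_add]
          constructor
          · intro p hp
            rcases Finset.mem_union.1 (vars_add_subset _ _ hp) with h' | h'
            · exact ihx.1 p h'
            · exact ihy.1 p h'
          · intro x'
            rw [lact_add, ihx.2 x', ihy.2 x', add_zero]
      | mul x y hx hy ihx ihy =>
          rw [map_mul]
          constructor
          · intro p hp
            rcases Finset.mem_union.1 (vars_mul _ _ hp) with h' | h'
            · exact ihx.1 p h'
            · exact ihy.1 p h'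
          · intro x'
            rw [lact_mul, ihx.2 x', ihy.2 x', mul_zero, mul_zero, add_zero]
    intro g hg
    exact key g (hsup _ g hg)
  -- ρ ∘ π = id on A
  have hρπΦ : ∀ i, ρ (π (Φ i)) = Φ i := by
    intro i
    have hQ := hρQ (π (Φ i)) (hπΦvars i)
    have hπ := hπρ (π (Φ i)) (fun p hp => (hπΦvars i p hp).1)
    exact (H (π (Φ i)) (hπΦvars i)).unique ⟨hQ, hπ⟩ ⟨⟨hdeg i, hinv i⟩, rfl⟩
  have hρπA : ∀ f ∈ A, ρ (π f) = f := by
    intro f hf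
    induction hf using Algebra.adjoin_induction with
    | mem x hx =>
        obtain ⟨k, i, rfl⟩ := hx
        rw [hπDk, hρDk, hρπΦ]
    | algebraMap r => rw [AlgHom.commutes, AlgHom.commutes]
    | add x y hx hy ihx ihy => rw [map_add, map_add, ihx, ihy]
    | mul x y hx hy ihx ihy => rw [map_mul, map_mul, ihx, ihy]
  refine ⟨?_, ?_, ?_⟩
  · intro f₁ h₁ f₂ h₂ hf
    rw [← hρπA f₁ h₁, ← hρπA f₂ h₂, hf]
  · intro g hg
    exact ⟨ρ g, hρA g hg, hπρ g hg⟩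
  · intro f _ p hp
    exact hπvars f p hp
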